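/- In the blinding problem, with positive channel gains h_j² and μ_j for j in an index set B, noise σ² > 0 and power P > 0, setting a_j = (1 + (σ²/P)(Σ_{l∈B} 1/μ_l − (1/h_j²)Σ_{l∈B} h_l²/μ_l)) / ((μ_j/h_j²)Σ_{l∈B} h_l²/μ_l) gives a solution with Σ_{j∈B} a_j = 1 and h_j²/(σ² + μ_j a_j P) equal to a common constant Φ for all j ∈ B. -/

import Mathlib

theorem blinding_weights_equalize {ι : Type*} (B : Finset ι) (hB : B.Nonempty)
    (h2 μ : ι → ℝ) (hh : ∀ j ∈ B, 0 < h2 j) (hμ : ∀ j ∈ B, 0 < μ j)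
    (σ2 P : ℝ) (hσ : 0 < σ2) (hP : 0 < P)
    (a : ι → ℝ)
    (ha : ∀ j ∈ B, a j =
      (1 + (σ2 / P) * ((∑ l ∈ B, 1 / μ l) - (1 / h2 j) * ∑ l ∈ B, h2 l / μ l)) /
        ((μ j / h2 j) * ∑ l ∈ B, h2 l / μ l)) :
    (∑ j ∈ B, a j) = 1 ∧
    ∃ Φ : ℝ, ∀ j ∈ B, h2 j / (σ2 + μ j * a j * P) = Φ := by
  set S := ∑ l ∈ B, h2 l / μ l with hSdef
  set T := ∑ l ∈ B, 1 / μ l with hTdef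
  have hS : 0 < S := Finset.sum_pos (fun l hl => div_pos (hh l hl) (hμ l hl)) hB
  have hT : 0 < T := Finset.sum_pos (fun l hl => div_pos one_pos (hμ l hl)) hB
  have key : ∀ j ∈ B, a j = (h2 j / μ j) * ((1 + (σ2 / P) * T) / S) - (σ2 / P) * (1 / μ j) := by
    intro j hj
    rw [ha j hj]
    have h1 := (hh j hj).ne'
    have h2' := (hμ j hj).ne'
    field_simp
    ring
  constructor
  · rw [Finset.sum_congr rfl key, Finset.sum_sub_distrib, ← Finset.sum_mul, ← Finset.mul_sum]
    rw [← hSdef, ← hTdef]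
    field_simp
    ring
  · refine ⟨S / (P + σ2 * T), fun j hj => ?_⟩
    have hden : σ2 + μ j * a j * P = h2 j * (P + σ2 * T) / S := by
      rw [key j hj]
      have h2' := (hμ j hj).ne'
      field_simp
      ring
    rw [hden]
    have h1 := (hh j hj).ne'
    have hPT : P + σ2 * T ≠ 0 := by positivity
    field_simp
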